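/- For all real numbers γ0 and b1, the first-order Melnikov integral along the homoclinic loop of the cusp normal form (with a1 = 1) evaluates as: ∫_{−1}^{2} [ y(1−y)(γ0 + b1·y)/√((2/3)(2−y)) − (y+1)(γ0 + b1·y)·√((2/3)(2−y)) ] dy = −(24√2/5)·γ0 − (36√2/7)·b1. -/

import Mathlib

open MeasureTheory Set intervalIntegral

private lemma rpow_neg_half_eq_inv_sqrt (t : ℝ) :
    t ^ (-(1/2) : ℝ) = (Real.sqrt t)⁻¹ := by
  rcases lt_or_ge t 0 with ht | ht
  · rw [Real.rpow_def_of_neg ht, Real.sqrt_eq_zero'.2 (le_of_lt ht), inv_zero,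
      show (-(1/2):ℝ) * Real.pi = -(Real.pi/2) by ring, Real.cos_neg,
      Real.cos_pi_div_two, mul_zero]
  · rw [Real.sqrt_eq_rpow, ← Real.rpow_neg ht]

private lemma melnikov_alg (γ0 b1 x s : ℝ) (hsne : s ≠ 0) (hsq : s^2 = 2/3*(2-x)) :
  x*(1-x)*(γ0+b1*x)/s - (x+1)*(γ0+b1*x)*s
  = (3*(b1/7)*x^2 + 2*(b1/7+γ0/5)*x + (12*b1/7+γ0/5))*s
    + (b1/7*x^3 + (b1/7+γ0/5)*x^2 + (12*b1/7+γ0/5)*x + (48*b1/7+24*γ0/5)) * (-(2/3)/(2*s)) := by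
  field_simp
  ring_nf
  linear_combination (-(147*γ0*x + 126*γ0 + 135*x*b1 + 150*x^2*b1 + 180*b1)) * hsq

/-- First-order Melnikov integral along the homoclinic loop (case `r = s = 1`, `a₁ = 1`). -/
theorem stmt13 (γ0 b1 : ℝ) :
    (∫ y in (-1 : ℝ)..2,
        (y * (1 - y) * (γ0 + b1 * y) / Real.sqrt ((2 / 3) * (2 - y))
          - (y + 1) * (γ0 + b1 * y) * Real.sqrt ((2 / 3) * (2 - y))))
      = -(24 * Real.sqrt 2 / 5) * γ0 - (36 * Real.sqrt 2 / 7) * b1 := by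
  set f : ℝ → ℝ := fun y => y * (1 - y) * (γ0 + b1 * y) / Real.sqrt ((2 / 3) * (2 - y))
          - (y + 1) * (γ0 + b1 * y) * Real.sqrt ((2 / 3) * (2 - y)) with hf
  set R : ℝ → ℝ := fun y => b1/7 * y^3 + (b1/7 + γ0/5) * y^2 + (12*b1/7 + γ0/5) * y
      + (48*b1/7 + 24*γ0/5) with hR
  set F : ℝ → ℝ := fun y => R y * Real.sqrt ((2/3) * (2 - y)) with hF
  have hint : IntervalIntegrable f volume (-1) 2 := by
    have A : IntervalIntegrable (fun t : ℝ => t ^ (-(1/2) : ℝ)) volume 0 2 :=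
      intervalIntegrable_rpow' (by norm_num)
    have B := ((A.comp_mul_left (c := 2/3)).comp_sub_left 2).symm
    norm_num at B
    -- B : IntervalIntegrable (fun x => (2/3 * (2 - x)) ^ (-(1/2):ℝ)) volume (-1) 2
    have C : IntervalIntegrable
        (fun y : ℝ => (y * (1 - y) * (γ0 + b1 * y)) * ((2/3) * (2 - y)) ^ (-(1/2) : ℝ))
        volume (-1) 2 :=
      B.continuousOn_mul (by fun_prop)
    have hfe : f = fun y : ℝ =>
        (y * (1 - y) * (γ0 + b1 * y)) * ((2/3) * (2 - y)) ^ (-(1/2) : ℝ)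
          - (y + 1) * (γ0 + b1 * y) * Real.sqrt ((2 / 3) * (2 - y)) := by
      funext y
      simp only [hf]
      rw [rpow_neg_half_eq_inv_sqrt]
      ring
    rw [hfe]
    exact C.sub ((Continuous.intervalIntegrable (by fun_prop) _ _))
  have hFTC := integral_eq_sub_of_hasDeriv_right_of_le (a := (-1:ℝ)) (b := 2)
    (by norm_num) (f := F) (f' := f) (Continuous.continuousOn (by fun_prop))
    ?_ hint
  · rw [hFTC]
    have h2 : (2:ℝ)/3 * (2 - 2) = 0 := by norm_num
    have h1 : (2:ℝ)/3 * (2 - (-1)) = 2 := by norm_num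
    rw [hF]
    simp only [h2, h1, Real.sqrt_zero]
    rw [hR]
    ring
  · intro x hx
    have hpos : 0 < (2:ℝ)/3 * (2 - x) := by nlinarith [hx.2]
    have hsne : Real.sqrt ((2:ℝ)/3 * (2 - x)) ≠ 0 := (Real.sqrt_pos.2 hpos).ne'
    have hsq : Real.sqrt ((2:ℝ)/3 * (2 - x)) ^ 2 = (2:ℝ)/3 * (2 - x) :=
      Real.sq_sqrt hpos.le
    have hu : HasDerivAt (fun y : ℝ => (2:ℝ)/3 * (2 - y)) (-(2/3)) x := by
      simpa using ((hasDerivAt_id x).const_sub 2).const_mul ((2:ℝ)/3)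
    have hs : HasDerivAt (fun y : ℝ => Real.sqrt ((2:ℝ)/3 * (2 - y)))
        (-(2/3) / (2 * Real.sqrt ((2:ℝ)/3 * (2 - x)))) x := hu.sqrt hpos.ne'
    have hRd : HasDerivAt R
        (3*(b1/7)*x^2 + 2*(b1/7 + γ0/5)*x + (12*b1/7 + γ0/5)) x := by
      have h := ((((hasDerivAt_pow 3 x).const_mul (b1/7)).add
        ((hasDerivAt_pow 2 x).const_mul (b1/7 + γ0/5))).add
        ((hasDerivAt_id x).const_mul (12*b1/7 + γ0/5))).add_const
        (48*b1/7 + 24*γ0/5)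
      exact h.congr_deriv (by push_cast; ring)
    have hFd := hRd.mul hs
    have hfx : f x = (3*(b1/7)*x^2 + 2*(b1/7 + γ0/5)*x + (12*b1/7 + γ0/5))
        * Real.sqrt ((2:ℝ)/3 * (2 - x))
        + (b1/7*x^3 + (b1/7 + γ0/5)*x^2 + (12*b1/7 + γ0/5)*x + (48*b1/7 + 24*γ0/5))
          * (-(2/3) / (2 * Real.sqrt ((2:ℝ)/3 * (2 - x)))) := by
      simp only [hf]
      exact melnikov_alg γ0 b1 x _ hsne hsq
    rw [hfx]
    exact hFd.hasDerivWithinAt
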